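/- Let d ≥ 1, let H ∈ M_d(ℝ) be symmetric and invertible with exactly one negative eigenvalue (counted with multiplicity), and let M ∈ M_d(ℝ) be symmetric positive definite. Consider the real (2d)×(2d) block matrix Φ = [[0, −H],[I, M]]. Then Φ is invertible, Φ has no eigenvalue (over ℂ) on the imaginary axis, and Φ has exactly one eigenvalue, counted with algebraic multiplicity, in the half-plane {Re z < 0}; moreover this eigenvalue is real and negative. -/

import Mathlib

open Matrix Polynomial

namespace Stmt1Aux

variable {d : ℕ}

/-- The quadratic matrix polynomial determinant `det (X² I - X M + H)`. -/
noncomputable def qp (M H : Matrix (Fin d) (Fin d) ℝ) : Polynomial ℝ :=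
  ((X:ℝ[X]) ^ 2 • (1 : Matrix (Fin d) (Fin d) ℝ[X]) - (X:ℝ[X]) • M.map C + H.map C).det

lemma qp_eval₂ (M H : Matrix (Fin d) (Fin d) ℝ) {R : Type*} [CommRing R]
    (f : ℝ →+* R) (x : R) :
    (qp M H).eval₂ f x =
      (x ^ 2 • (1 : Matrix (Fin d) (Fin d) R) - x • M.map f + H.map f).det := by
  have h1 : (qp M H).eval₂ f x = (eval₂RingHom f x) (qp M H) := rfl
  rw [h1, qp, RingHom.map_det]
  congr 1
  ext i j
  by_cases hij : i = j <;>
    simp [RingHom.mapMatrix_apply, Matrix.map_apply, Matrix.sub_apply, Matrix.add_apply,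
      Matrix.smul_apply, Matrix.one_apply, hij, smul_eq_mul] <;> ring

lemma qp_eval (M H : Matrix (Fin d) (Fin d) ℝ) (x : ℝ) :
    (qp M H).eval x = (x ^ 2 • (1 : Matrix (Fin d) (Fin d) ℝ) - x • M + H).det := by
  have h := qp_eval₂ M H (RingHom.id ℝ) x
  rw [show (qp M H).eval₂ (RingHom.id ℝ) x = (qp M H).eval x from rfl] at h
  simpa [Matrix.map_id] using h

lemma qpC_eval (M H : Matrix (Fin d) (Fin d) ℝ) (z : ℂ) :
    ((qp M H).map (algebraMap ℝ ℂ)).eval z =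
      (z ^ 2 • (1 : Matrix (Fin d) (Fin d) ℂ) - z • M.map (algebraMap ℝ ℂ)
        + H.map (algebraMap ℝ ℂ)).det := by
  rw [eval_map]; exact qp_eval₂ M H (algebraMap ℝ ℂ) z

lemma charpoly_eval {n : Type*} [DecidableEq n] [Fintype n] {R : Type*} [CommRing R]
    (A : Matrix n n R) (x : R) :
    A.charpoly.eval x = (x • (1 : Matrix n n R) - A).det := by
  rw [Matrix.charpoly, show eval x (charmatrix A).det = (evalRingHom x) (charmatrix A).det from rfl,
    RingHom.map_det]
  congr 1
  ext i j
  by_cases hij : i = j <;>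
    simp [RingHom.mapMatrix_apply, Matrix.map_apply, charmatrix_apply, Matrix.sub_apply,
      Matrix.smul_apply, Matrix.one_apply, Matrix.diagonal_apply, hij, smul_eq_mul]

lemma charpoly_Phi (M H : Matrix (Fin d) (Fin d) ℝ) :
    (fromBlocks 0 (-H) 1 M).charpoly = qp M H := by
  have key : ∀ x : ℝ, x ≠ 0 →
      ((fromBlocks 0 (-H) 1 M).charpoly - qp M H).IsRoot x := by
    intro x hx
    have hblocks : x • (1 : Matrix (Fin d ⊕ Fin d) (Fin d ⊕ Fin d) ℝ) - fromBlocks 0 (-H) 1 M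
        = fromBlocks (x • 1) H (-1) (x • (1 : Matrix (Fin d) (Fin d) ℝ) - M) := by
      ext (i | i) (j | j) <;>
        simp [Matrix.one_apply, Matrix.smul_apply, Sum.inl.injEq, Sum.inr.injEq]
    letI : Invertible (x • (1 : Matrix (Fin d) (Fin d) ℝ)) :=
      ⟨x⁻¹ • 1, by simp [Matrix.smul_mul, Matrix.mul_smul, smul_smul, inv_mul_cancel₀ hx,
          mul_inv_cancel₀ hx],
        by simp [Matrix.smul_mul, Matrix.mul_smul, smul_smul, inv_mul_cancel₀ hx,
          mul_inv_cancel₀ hx]⟩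
    have hinv : ⅟(x • (1 : Matrix (Fin d) (Fin d) ℝ)) = x⁻¹ • 1 := rfl
    have h1 : ((fromBlocks 0 (-H) 1 M).charpoly).eval x
        = x ^ d * ((x • (1 : Matrix (Fin d) (Fin d) ℝ) - M) - (-1) * (x⁻¹ • 1) * H).det := by
      rw [charpoly_eval, hblocks, Matrix.det_fromBlocks₁₁, hinv, det_smul, det_one,
        Fintype.card_fin, mul_one]
    have h2 : ((x • (1 : Matrix (Fin d) (Fin d) ℝ) - M) - (-1) * (x⁻¹ • 1) * H)
        = x • (1 : Matrix (Fin d) (Fin d) ℝ) - M + x⁻¹ • H := by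
      simp [Matrix.neg_mul, Matrix.smul_mul, Matrix.one_mul, sub_neg_eq_add]
    have h3 : x ^ d * (x • (1 : Matrix (Fin d) (Fin d) ℝ) - M + x⁻¹ • H).det
        = (x • (x • (1 : Matrix (Fin d) (Fin d) ℝ) - M + x⁻¹ • H)).det := by
      rw [det_smul, Fintype.card_fin]
    have h4 : x • (x • (1 : Matrix (Fin d) (Fin d) ℝ) - M + x⁻¹ • H)
        = x ^ 2 • (1 : Matrix (Fin d) (Fin d) ℝ) - x • M + x • x⁻¹ • H := by
      rw [smul_add, smul_sub, smul_smul, ← sq]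
    have h5 : x • x⁻¹ • H = H := by rw [smul_smul, mul_inv_cancel₀ hx, one_smul]
    simp only [IsRoot, eval_sub, h1, h2, h3, h4, h5, qp_eval, sub_eq_zero]
  have hinf : {x : ℝ | ((fromBlocks 0 (-H) 1 M).charpoly - qp M H).IsRoot x}.Infinite := by
    apply Set.Infinite.mono (s := {x : ℝ | x ≠ 0})
    · intro x hx; exact key x hx
    · exact Set.Finite.infinite_compl (Set.finite_singleton 0)
  have h0 := Polynomial.eq_zero_of_infinite_isRoot _ hinf
  exact sub_eq_zero.mp h0

lemma charpolyC (M H : Matrix (Fin d) (Fin d) ℝ) :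
    ((fromBlocks 0 (-H) 1 M).map (fun x : ℝ => (x : ℂ))).charpoly
      = (qp M H).map (algebraMap ℝ ℂ) := by
  have h : (fun x : ℝ => (x : ℂ)) = ⇑(algebraMap ℝ ℂ) := rfl
  rw [h, Matrix.charpoly_map, charpoly_Phi]

lemma symm_dot (A : Matrix (Fin d) (Fin d) ℝ) (hA : A.IsHermitian) (v w : Fin d → ℝ) :
    v ⬝ᵥ (A *ᵥ w) = (A *ᵥ v) ⬝ᵥ w := by
  have hT : Aᵀ = A := by
    rw [← Matrix.conjTranspose_eq_transpose_of_trivial]; exact hA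
  rw [dotProduct_mulVec, ← mulVec_transpose, hT]

lemma repr_mulVec (A : Matrix (Fin d) (Fin d) ℝ) (hA : A.IsHermitian)
    (x : EuclideanSpace ℝ (Fin d)) (i : Fin d) :
    hA.eigenvectorBasis.repr
        ((WithLp.equiv 2 (Fin d → ℝ)).symm (A *ᵥ (WithLp.equiv 2 (Fin d → ℝ) x))) i
      = hA.eigenvalues i * hA.eigenvectorBasis.repr x i := by
  rw [OrthonormalBasis.repr_apply_apply, OrthonormalBasis.repr_apply_apply]
  have h1 : (inner ℝ (hA.eigenvectorBasis i)
      ((WithLp.equiv 2 (Fin d → ℝ)).symm (A *ᵥ (WithLp.equiv 2 (Fin d → ℝ) x))) : ℝ)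
      = (WithLp.equiv 2 (Fin d → ℝ) (hA.eigenvectorBasis i)) ⬝ᵥ
          (A *ᵥ (WithLp.equiv 2 (Fin d → ℝ) x)) := by
    simp [PiLp.inner_apply, dotProduct, mul_comm]
  have h2 : (inner ℝ (hA.eigenvectorBasis i) x : ℝ)
      = (WithLp.equiv 2 (Fin d → ℝ) (hA.eigenvectorBasis i)) ⬝ᵥ (WithLp.equiv 2 (Fin d → ℝ) x) :=
    by simp [PiLp.inner_apply, dotProduct, mul_comm]
  rw [h1, h2, symm_dot A hA, WithLp.equiv_apply, hA.mulVec_eigenvectorBasis, smul_dotProduct, smul_eq_mul]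

lemma dot_eigen (A : Matrix (Fin d) (Fin d) ℝ) (hA : A.IsHermitian)
    (x : EuclideanSpace ℝ (Fin d)) :
    (WithLp.equiv 2 (Fin d → ℝ) x) ⬝ᵥ (A *ᵥ (WithLp.equiv 2 (Fin d → ℝ) x))
      = ∑ i, hA.eigenvalues i * (hA.eigenvectorBasis.repr x i) ^ 2 := by
  have h1 : (WithLp.equiv 2 (Fin d → ℝ) x) ⬝ᵥ (A *ᵥ (WithLp.equiv 2 (Fin d → ℝ) x))
      = (inner ℝ x ((WithLp.equiv 2 (Fin d → ℝ)).symm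
          (A *ᵥ (WithLp.equiv 2 (Fin d → ℝ) x))) : ℝ) := by
    simp [PiLp.inner_apply, dotProduct, mul_comm]
  rw [h1, ← hA.eigenvectorBasis.repr.inner_map_map x]
  rw [PiLp.inner_apply]
  apply Finset.sum_congr rfl
  intro i _
  rw [RCLike.inner_apply, starRingEnd_apply, star_trivial, repr_mulVec]
  ring

lemma ker_repr (A : Matrix (Fin d) (Fin d) ℝ) (hA : A.IsHermitian)
    (w : Fin d → ℝ) (hw : A *ᵥ w = 0) {j : Fin d} (hj : hA.eigenvalues j ≠ 0) :
    hA.eigenvectorBasis.repr ((WithLp.equiv 2 (Fin d → ℝ)).symm w) j = 0 := by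
  have := repr_mulVec A hA ((WithLp.equiv 2 (Fin d → ℝ)).symm w) j
  rw [Equiv.apply_symm_apply, hw] at this
  have h0 : hA.eigenvectorBasis.repr ((WithLp.equiv 2 (Fin d → ℝ)).symm (0 : Fin d → ℝ)) j = 0 := by
    simp
  rw [h0] at this
  rcases mul_eq_zero.mp this.symm with h | h
  · exact absurd h hj
  · exact h

lemma dot_self_pos {v : Fin d → ℝ} (hv : v ≠ 0) : 0 < v ⬝ᵥ v := by
  have h1 : ∀ i ∈ Finset.univ, (0:ℝ) ≤ v i * v i := fun i _ => mul_self_nonneg _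
  obtain ⟨j, hj⟩ := Function.ne_iff.mp hv
  exact Finset.sum_pos' h1 ⟨j, Finset.mem_univ j, mul_self_pos.mpr hj⟩

lemma H_eigen_struct (H : Matrix (Fin d) (Fin d) ℝ) (hHs : H.IsHermitian) (hHinv : IsUnit H)
    (hHneg : (Finset.univ.filter (fun i => hHs.eigenvalues i < 0)).card = 1) :
    ∃ i₀ : Fin d, hHs.eigenvalues i₀ < 0 ∧ ∀ i, i ≠ i₀ → 0 < hHs.eigenvalues i := by
  have hdet : H.det ≠ 0 := by
    have := (Matrix.isUnit_iff_isUnit_det H).mp hHinv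
    exact IsUnit.ne_zero this
  have hprod : H.det = ∏ i, hHs.eigenvalues i := by
    simpa using hHs.det_eq_prod_eigenvalues
  have hne : ∀ i, hHs.eigenvalues i ≠ 0 := by
    intro i hi
    apply hdet
    rw [hprod]
    exact Finset.prod_eq_zero (Finset.mem_univ i) hi
  obtain ⟨i₀, hfil⟩ := Finset.card_eq_one.mp hHneg
  refine ⟨i₀, ?_, ?_⟩
  · have : i₀ ∈ Finset.univ.filter (fun i => hHs.eigenvalues i < 0) := by
      rw [hfil]; exact Finset.mem_singleton_self i₀
    exact (Finset.mem_filter.mp this).2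
  · intro i hi
    have : i ∉ Finset.univ.filter (fun i => hHs.eigenvalues i < 0) := by
      rw [hfil]; simpa using hi
    have h2 : ¬ hHs.eigenvalues i < 0 := fun hlt => this (Finset.mem_filter.mpr ⟨Finset.mem_univ i, hlt⟩)
    exact lt_of_le_of_ne (not_lt.mp h2) (Ne.symm (hne i))

lemma det_H_neg (H : Matrix (Fin d) (Fin d) ℝ) (hHs : H.IsHermitian) (hHinv : IsUnit H)
    (hHneg : (Finset.univ.filter (fun i => hHs.eigenvalues i < 0)).card = 1) :
    H.det < 0 := by
  obtain ⟨i₀, hi₀, hpos⟩ := H_eigen_struct H hHs hHinv hHneg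
  have hprod : H.det = ∏ i, hHs.eigenvalues i := by
    simpa using hHs.det_eq_prod_eigenvalues
  rw [hprod, ← Finset.mul_prod_erase Finset.univ _ (Finset.mem_univ i₀)]
  apply mul_neg_of_neg_of_pos hi₀
  exact Finset.prod_pos fun i hi => hpos i (Finset.ne_of_mem_erase hi)

lemma no_neg_plane (H : Matrix (Fin d) (Fin d) ℝ) (hHs : H.IsHermitian) (hHinv : IsUnit H)
    (hHneg : (Finset.univ.filter (fun i => hHs.eigenvalues i < 0)).card = 1)
    (u w : EuclideanSpace ℝ (Fin d)) (hind : LinearIndependent ℝ ![u, w])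
    (hneg : ∀ x : EuclideanSpace ℝ (Fin d), x ∈ Submodule.span ℝ {u, w} → x ≠ 0 →
      (WithLp.equiv 2 (Fin d → ℝ) x) ⬝ᵥ (H *ᵥ (WithLp.equiv 2 (Fin d → ℝ) x)) < 0) : False := by
  obtain ⟨i₀, hi₀, hpos⟩ := H_eigen_struct H hHs hHinv hHneg
  set b := hHs.eigenvectorBasis with hb
  set W : Submodule ℝ (EuclideanSpace ℝ (Fin d)) := Submodule.span ℝ {u, w} with hWdef
  set P : Submodule ℝ (EuclideanSpace ℝ (Fin d)) :=
    Submodule.span ℝ (Set.range (fun i : {i : Fin d // i ≠ i₀} => b i.1)) with hPdef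
  have hd1 : 1 ≤ d := Nat.one_le_iff_ne_zero.mpr (by
    rintro rfl; exact absurd i₀.2 (by simp))
  have hPrank : Module.finrank ℝ P = d - 1 := by
    have hli : LinearIndependent ℝ (fun i : {i : Fin d // i ≠ i₀} => b i.1) :=
      b.orthonormal.linearIndependent.comp _ Subtype.val_injective
    rw [finrank_span_eq_card hli]
    simp [Fintype.card_subtype_compl]
  have hWrank : Module.finrank ℝ W = 2 := by
    have hset : ({u, w} : Set (EuclideanSpace ℝ (Fin d))) = Set.range ![u, w] := by
      ext y; simp [Fin.exists_fin_two]; tauto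
    rw [hWdef, hset, finrank_span_eq_card hind, Fintype.card_fin]
  have hPpos : ∀ x ∈ P, x ≠ 0 →
      0 < (WithLp.equiv 2 (Fin d → ℝ) x) ⬝ᵥ (H *ᵥ (WithLp.equiv 2 (Fin d → ℝ) x)) := by
    intro x hxP hx0
    rw [dot_eigen H hHs]
    have hrepr0 : b.repr x i₀ = 0 := by
      rw [OrthonormalBasis.repr_apply_apply]
      have hker : P ≤ LinearMap.ker ((innerSL ℝ (b i₀) : _ →L[ℝ] ℝ) : _ →ₗ[ℝ] ℝ) := by
        rw [hPdef, Submodule.span_le]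
        rintro y ⟨i, rfl⟩
        simp only [SetLike.mem_coe, LinearMap.mem_ker, ContinuousLinearMap.coe_coe,
          innerSL_apply_apply]
        exact b.orthonormal.2 (Ne.symm i.2)
      have := hker hxP
      simpa using this
    have hterms : ∀ i ∈ Finset.univ, (0:ℝ) ≤ hHs.eigenvalues i * (b.repr x i) ^ 2 := by
      intro i _
      by_cases hii : i = i₀
      · subst hii; rw [hrepr0]; simp
      · exact mul_nonneg (le_of_lt (hpos i hii)) (sq_nonneg _)
    have hx0' : b.repr x ≠ 0 := fun h => hx0 (by
      have := congrArg b.repr.symm h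
      simpa using this)
    obtain ⟨j, hj⟩ := Function.ne_iff.mp (fun h => hx0' (by ext i; exact congrFun h i))
    have hji₀ : j ≠ i₀ := by
      intro hji; rw [hji] at hj; exact hj (by simpa using hrepr0)
    refine Finset.sum_pos' hterms ⟨j, Finset.mem_univ j, ?_⟩
    have : b.repr x j ≠ 0 := by simpa using hj
    exact mul_pos (hpos j hji₀) (by positivity)
  have hsum := Submodule.finrank_sup_add_finrank_inf_eq W P
  have hle : Module.finrank ℝ ↥(W ⊔ P) ≤ d := by
    have := Submodule.finrank_le (W ⊔ P)
    simpa using this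
  have hinf : 0 < Module.finrank ℝ ↥(W ⊓ P) := by omega
  have hnebot : W ⊓ P ≠ ⊥ := by
    intro h
    rw [h] at hinf
    simp at hinf
  obtain ⟨x, hxmem, hx0⟩ := Submodule.exists_mem_ne_zero_of_ne_bot hnebot
  exact absurd (hPpos x hxmem.2 hx0) (not_lt.mpr (le_of_lt (hneg x hxmem.1 hx0)))

lemma Bherm (M H : Matrix (Fin d) (Fin d) ℝ) (hHs : H.IsHermitian) (hMs : M.IsHermitian)
    (x : ℝ) : (x ^ 2 • (1 : Matrix (Fin d) (Fin d) ℝ) - x • M + H).IsHermitian := by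
  unfold Matrix.IsHermitian
  rw [Matrix.conjTranspose_add, Matrix.conjTranspose_sub, Matrix.conjTranspose_smul,
    Matrix.conjTranspose_smul, Matrix.conjTranspose_one, hHs.eq, hMs.eq,
    star_trivial, star_trivial]

lemma eig_pair (H M : Matrix (Fin d) (Fin d) ℝ) (hHs : H.IsHermitian) (hHinv : IsUnit H)
    (hHneg : (Finset.univ.filter (fun i => hHs.eigenvalues i < 0)).card = 1)
    (hM : M.PosDef) {x : ℝ} (hx : x < 0)
    (hB : (x ^ 2 • (1 : Matrix (Fin d) (Fin d) ℝ) - x • M + H).IsHermitian)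
    {i j : Fin d} (hij : i ≠ j) (hi : hB.eigenvalues i ≤ 0) (hj : hB.eigenvalues j ≤ 0) :
    False := by
  set B := x ^ 2 • (1 : Matrix (Fin d) (Fin d) ℝ) - x • M + H with hBdef
  apply no_neg_plane H hHs hHinv hHneg (hB.eigenvectorBasis i) (hB.eigenvectorBasis j) ?_ ?_
  · have hinj : Function.Injective ![i, j] := by
      intro a c hac
      fin_cases a <;> fin_cases c <;> simp_all
    have h2 : Orthonormal ℝ (fun k : Fin 2 => hB.eigenvectorBasis (![i, j] k)) :=
      hB.eigenvectorBasis.orthonormal.comp _ hinj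
    have h3 := h2.linearIndependent
    have h4 : ![hB.eigenvectorBasis i, hB.eigenvectorBasis j]
        = fun k : Fin 2 => hB.eigenvectorBasis (![i, j] k) := by
      funext k; fin_cases k <;> rfl
    rw [h4]; exact h3
  · intro y hy hy0
    obtain ⟨a, c, hac⟩ := Submodule.mem_span_pair.mp hy
    have hQB : (WithLp.equiv 2 (Fin d → ℝ) y) ⬝ᵥ (B *ᵥ (WithLp.equiv 2 (Fin d → ℝ) y)) ≤ 0 := by
      rw [dot_eigen B hB]
      apply Finset.sum_nonpos
      intro k _
      have hrepr : hB.eigenvectorBasis.repr y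
          = a • EuclideanSpace.single i (1:ℝ) + c • EuclideanSpace.single j (1:ℝ) := by
        rw [← hac, map_add, _root_.map_smul, _root_.map_smul, OrthonormalBasis.repr_self,
          OrthonormalBasis.repr_self]
      by_cases hik : k = i
      · subst hik
        have hkr : hB.eigenvectorBasis.repr y k = a := by
          rw [hrepr]; simp [EuclideanSpace.single_apply, hij, Ne.symm hij]
        rw [hkr]
        exact mul_nonpos_of_nonpos_of_nonneg hi (sq_nonneg _)
      · by_cases hjk : k = j
        · subst hjk
          have hkr : hB.eigenvectorBasis.repr y k = c := by
            rw [hrepr]; simp [EuclideanSpace.single_apply, hik, Ne.symm hij]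
          rw [hkr]
          exact mul_nonpos_of_nonpos_of_nonneg hj (sq_nonneg _)
        · have hkr : hB.eigenvectorBasis.repr y k = 0 := by
            rw [hrepr]; simp [EuclideanSpace.single_apply, hik, hjk]
          rw [hkr]
          simp
    have hHy : H = B - x ^ 2 • (1 : Matrix (Fin d) (Fin d) ℝ) + x • M := by
      rw [hBdef]; abel
    set yv := WithLp.equiv 2 (Fin d → ℝ) y with hyv
    have hyv0 : yv ≠ 0 := fun h => hy0 (by
      have := congrArg (WithLp.equiv 2 (Fin d → ℝ)).symm h
      simpa [hyv] using this)
    have hexp : yv ⬝ᵥ (H *ᵥ yv) = yv ⬝ᵥ (B *ᵥ yv) - x ^ 2 * (yv ⬝ᵥ yv) + x * (yv ⬝ᵥ (M *ᵥ yv)) := by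
      rw [hHy, Matrix.add_mulVec, Matrix.sub_mulVec, dotProduct_add, dotProduct_sub,
        Matrix.smul_mulVec, Matrix.smul_mulVec, Matrix.one_mulVec,
        dotProduct_smul, dotProduct_smul, smul_eq_mul, smul_eq_mul]
    rw [hexp]
    have h1 : 0 < yv ⬝ᵥ yv := dot_self_pos hyv0
    have h2 : 0 < yv ⬝ᵥ (M *ᵥ yv) := by
      have := hM.dotProduct_mulVec_pos hyv0
      simpa using this
    have h3 : 0 < x ^ 2 := by nlinarith
    have h4 := mul_pos h3 h1
    have h5 := mul_neg_of_neg_of_pos hx h2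
    linarith

lemma dot_B_expand (M H : Matrix (Fin d) (Fin d) ℝ) (x : ℝ) (v : Fin d → ℝ) :
    v ⬝ᵥ ((x ^ 2 • (1 : Matrix (Fin d) (Fin d) ℝ) - x • M + H) *ᵥ v)
      = x ^ 2 * (v ⬝ᵥ v) - x * (v ⬝ᵥ (M *ᵥ v)) + v ⬝ᵥ (H *ᵥ v) := by
  rw [Matrix.add_mulVec, Matrix.sub_mulVec, dotProduct_add, dotProduct_sub,
    Matrix.smul_mulVec, Matrix.smul_mulVec, Matrix.one_mulVec,
    dotProduct_smul, dotProduct_smul, smul_eq_mul, smul_eq_mul]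

lemma quad_bound (H : Matrix (Fin d) (Fin d) ℝ) (v : Fin d → ℝ) :
    |v ⬝ᵥ (H *ᵥ v)| ≤ (∑ i, ∑ j, |H i j|) * (v ⬝ᵥ v) := by
  have hsq : ∀ i j : Fin d, |v i| * |v j| ≤ v ⬝ᵥ v := by
    intro i j
    have h1 : |v i| * |v j| ≤ (v i ^ 2 + v j ^ 2) / 2 := by
      nlinarith [sq_nonneg (|v i| - |v j|), sq_abs (v i), sq_abs (v j)]
    have h2 : v i ^ 2 ≤ v ⬝ᵥ v := by
      have heq : v ⬝ᵥ v = ∑ k, v k * v k := rfl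
      rw [heq, show v i ^ 2 = v i * v i from sq (v i)]
      exact Finset.single_le_sum (f := fun k => v k * v k)
        (fun k _ => mul_self_nonneg _) (Finset.mem_univ i)
    have h3 : v j ^ 2 ≤ v ⬝ᵥ v := by
      have heq : v ⬝ᵥ v = ∑ k, v k * v k := rfl
      rw [heq, show v j ^ 2 = v j * v j from sq (v j)]
      exact Finset.single_le_sum (f := fun k => v k * v k)
        (fun k _ => mul_self_nonneg _) (Finset.mem_univ j)
    linarith
  have hexp : v ⬝ᵥ (H *ᵥ v) = ∑ i, ∑ j, v i * (H i j * v j) := by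
    simp [dotProduct, Matrix.mulVec, Finset.mul_sum]
  rw [hexp]
  refine le_trans (Finset.abs_sum_le_sum_abs _ _) ?_
  rw [Finset.sum_mul]
  refine Finset.sum_le_sum fun i _ => ?_
  refine le_trans (Finset.abs_sum_le_sum_abs _ _) ?_
  rw [Finset.sum_mul]
  refine Finset.sum_le_sum fun j _ => ?_
  rw [abs_mul, abs_mul]
  calc |v i| * (|H i j| * |v j|) = |H i j| * (|v i| * |v j|) := by ring
    _ ≤ |H i j| * (v ⬝ᵥ v) := mul_le_mul_of_nonneg_left (hsq i j) (abs_nonneg _)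

lemma posdef_big (M H : Matrix (Fin d) (Fin d) ℝ) (hHs : H.IsHermitian) (hM : M.PosDef)
    {x : ℝ} (hx : x < 0) (hbig : (∑ i, ∑ j, |H i j|) < x ^ 2) :
    (x ^ 2 • (1 : Matrix (Fin d) (Fin d) ℝ) - x • M + H).PosDef := by
  refine Matrix.PosDef.of_dotProduct_mulVec_pos (Bherm M H hHs hM.1 x) fun v hv => ?_
  rw [star_trivial, dot_B_expand]
  have h1 : 0 < v ⬝ᵥ v := dot_self_pos hv
  have h2 : 0 < v ⬝ᵥ (M *ᵥ v) := by
    have := hM.dotProduct_mulVec_pos hv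
    simpa using this
  have h3 : -((∑ i, ∑ j, |H i j|) * (v ⬝ᵥ v)) ≤ v ⬝ᵥ (H *ᵥ v) := by
    have := quad_bound H v
    have := neg_abs_le (v ⬝ᵥ (H *ᵥ v))
    linarith
  nlinarith [mul_pos (sub_pos.mpr hbig) h1, mul_pos (neg_pos.mpr hx) h2]

lemma exists_neg_root (M H : Matrix (Fin d) (Fin d) ℝ) (hHs : H.IsHermitian) (hHinv : IsUnit H)
    (hHneg : (Finset.univ.filter (fun i => hHs.eigenvalues i < 0)).card = 1) (hM : M.PosDef) :
    ∃ x : ℝ, x < 0 ∧ (qp M H).eval x = 0 := by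
  set c := ∑ i, ∑ j, |H i j| with hc
  have hc0 : 0 ≤ c := Finset.sum_nonneg fun i _ => Finset.sum_nonneg fun j _ => abs_nonneg _
  set x₀ : ℝ := -(1 + c) with hx₀
  have hx₀neg : x₀ < 0 := by rw [hx₀]; linarith
  have hbig : c < x₀ ^ 2 := by rw [hx₀]; nlinarith
  have hfx₀ : 0 < (qp M H).eval x₀ := by
    rw [qp_eval]
    exact (posdef_big M H hHs hM hx₀neg hbig).det_pos
  have hf0 : (qp M H).eval 0 < 0 := by
    have h : ((0:ℝ) ^ 2 • (1 : Matrix (Fin d) (Fin d) ℝ) - (0:ℝ) • M + H) = H := by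
      simp
    rw [qp_eval, h]
    exact det_H_neg H hHs hHinv hHneg
  have hcont : ContinuousOn (fun t => (qp M H).eval t) (Set.Icc x₀ 0) :=
    (Polynomial.continuous _).continuousOn
  have hmem : (0:ℝ) ∈ Set.Icc ((qp M H).eval 0) ((qp M H).eval x₀) :=
    ⟨le_of_lt hf0, le_of_lt hfx₀⟩
  obtain ⟨x, hxmem, hxval⟩ := intermediate_value_Icc' (le_of_lt hx₀neg) hcont hmem
  refine ⟨x, ?_, hxval⟩
  rcases lt_or_eq_of_le hxmem.2 with h | h
  · exact h
  · exfalso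
    rw [h] at hxval
    change (qp M H).eval 0 = 0 at hxval
    linarith

lemma unique_aux (M H : Matrix (Fin d) (Fin d) ℝ) (hHs : H.IsHermitian) (hHinv : IsUnit H)
    (hHneg : (Finset.univ.filter (fun i => hHs.eigenvalues i < 0)).card = 1) (hM : M.PosDef)
    {x y : ℝ} (hx : x < 0) (hlt : y < x)
    (hex : (qp M H).eval x = 0) (hey : (qp M H).eval y = 0) : False := by
  have hBx := Bherm M H hHs hM.1 x
  have hdetx : (x ^ 2 • (1 : Matrix (Fin d) (Fin d) ℝ) - x • M + H).det = 0 := by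
    rw [← qp_eval]; exact hex
  have hprod : (x ^ 2 • (1 : Matrix (Fin d) (Fin d) ℝ) - x • M + H).det
      = ∏ i, hBx.eigenvalues i := by simpa using hBx.det_eq_prod_eigenvalues
  obtain ⟨k, _, hk0⟩ := Finset.prod_eq_zero_iff.mp (hprod ▸ hdetx)
  have hnonneg : ∀ i, 0 ≤ hBx.eigenvalues i := by
    intro i
    by_contra hneg'
    push_neg at hneg'
    have hik : i ≠ k := fun h => by rw [h, hk0] at hneg'; exact lt_irrefl _ hneg'
    exact eig_pair H M hHs hHinv hHneg hM hx hBx hik (le_of_lt hneg') (le_of_eq hk0)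
  have hpsd : (x ^ 2 • (1 : Matrix (Fin d) (Fin d) ℝ) - x • M + H).PosSemidef :=
    hBx.posSemidef_iff_eigenvalues_nonneg.mpr hnonneg
  have hD : ((y ^ 2 - x ^ 2) • (1 : Matrix (Fin d) (Fin d) ℝ) + (x - y) • M).PosDef := by
    refine Matrix.PosDef.of_dotProduct_mulVec_pos ?_ ?_
    · unfold Matrix.IsHermitian
      rw [Matrix.conjTranspose_add, Matrix.conjTranspose_smul, Matrix.conjTranspose_smul,
        Matrix.conjTranspose_one, hM.1.eq, star_trivial, star_trivial]
    · intro v hv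
      rw [star_trivial, Matrix.add_mulVec, dotProduct_add, Matrix.smul_mulVec,
        Matrix.smul_mulVec, Matrix.one_mulVec, dotProduct_smul, dotProduct_smul,
        smul_eq_mul, smul_eq_mul]
      have h1 : 0 < v ⬝ᵥ v := dot_self_pos hv
      have h2 : 0 < v ⬝ᵥ (M *ᵥ v) := by
        have := hM.dotProduct_mulVec_pos hv
        simpa using this
      have h3 : x ^ 2 < y ^ 2 := by nlinarith
      have h4 : 0 < x - y := by linarith
      nlinarith [mul_pos (sub_pos.mpr h3) h1, mul_pos h4 h2]
  have hsum : (x ^ 2 • (1 : Matrix (Fin d) (Fin d) ℝ) - x • M + H)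
      + ((y ^ 2 - x ^ 2) • (1 : Matrix (Fin d) (Fin d) ℝ) + (x - y) • M)
      = y ^ 2 • (1 : Matrix (Fin d) (Fin d) ℝ) - y • M + H := by
    module
  have hpd : (y ^ 2 • (1 : Matrix (Fin d) (Fin d) ℝ) - y • M + H).PosDef := by
    rw [← hsum]
    exact Matrix.PosDef.posSemidef_add hpsd hD
  have := hpd.det_pos
  rw [← qp_eval] at this
  rw [hey] at this
  exact lt_irrefl _ this

lemma unique_neg_root (M H : Matrix (Fin d) (Fin d) ℝ) (hHs : H.IsHermitian) (hHinv : IsUnit H)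
    (hHneg : (Finset.univ.filter (fun i => hHs.eigenvalues i < 0)).card = 1) (hM : M.PosDef)
    {x y : ℝ} (hx : x < 0) (hy : y < 0)
    (hex : (qp M H).eval x = 0) (hey : (qp M H).eval y = 0) : x = y := by
  rcases lt_trichotomy x y with h | h | h
  · exact absurd (unique_aux M H hHs hHinv hHneg hM hy h hey hex) not_false
  · exact h
  · exact absurd (unique_aux M H hHs hHinv hHneg hM hx h hex hey) not_false

lemma trace_adj_conj (V D : Matrix (Fin d) (Fin d) ℝ) (hunit : star V * V = 1) :
    ((V * D * star V).adjugate).trace = D.adjugate.trace := by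
  rw [Matrix.adjugate_mul_distrib, Matrix.adjugate_mul_distrib, Matrix.trace_mul_comm,
    Matrix.mul_assoc, ← Matrix.adjugate_mul_distrib, hunit, Matrix.adjugate_one,
    Matrix.mul_one]

lemma trace_adj_pos (B : Matrix (Fin d) (Fin d) ℝ) (hB : B.IsHermitian) {k : Fin d}
    (hk0 : hB.eigenvalues k = 0) (hpos : ∀ j, j ≠ k → 0 < hB.eigenvalues j) :
    0 < B.adjugate.trace := by
  have hspec := hB.spectral_theorem
  set V : Matrix (Fin d) (Fin d) ℝ := (hB.eigenvectorUnitary : Matrix (Fin d) (Fin d) ℝ) with hV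
  have hdiag : Matrix.diagonal (RCLike.ofReal ∘ hB.eigenvalues)
      = Matrix.diagonal hB.eigenvalues := by
    congr 1
  have hunit : star V * V = 1 := Matrix.mem_unitaryGroup_iff'.mp hB.eigenvectorUnitary.2
  have hBeq : B = V * Matrix.diagonal hB.eigenvalues * star V := hspec.trans (by rw [hdiag, Unitary.conjStarAlgAut_apply])
  have htr : B.adjugate.trace = (Matrix.diagonal hB.eigenvalues).adjugate.trace := by
    rw [congrArg (fun A => Matrix.trace (Matrix.adjugate A)) hBeq]
    exact trace_adj_conj V _ hunit
  rw [htr, Matrix.adjugate_diagonal, Matrix.trace_diagonal]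
  have hzero : ∀ i ∈ Finset.univ, i ≠ k → ∏ j ∈ Finset.univ.erase i, hB.eigenvalues j = 0 := by
    intro i _ hik
    exact Finset.prod_eq_zero (Finset.mem_erase.mpr ⟨Ne.symm hik, Finset.mem_univ k⟩) hk0
  rw [Finset.sum_eq_single k hzero (by simp)]
  exact Finset.prod_pos fun j hj => hpos j (Finset.mem_erase.mp hj).1

lemma deriv_ne_zero (M H : Matrix (Fin d) (Fin d) ℝ) (hHs : H.IsHermitian) (hHinv : IsUnit H)
    (hHneg : (Finset.univ.filter (fun i => hHs.eigenvalues i < 0)).card = 1) (hM : M.PosDef)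
    {x : ℝ} (hx : x < 0) (hroot : (qp M H).eval x = 0) :
    (qp M H).derivative.eval x ≠ 0 := by
  set N : Matrix (Fin d) (Fin d) ℝ[X] :=
    (X:ℝ[X]) ^ 2 • (1 : Matrix (Fin d) (Fin d) ℝ[X]) - (X:ℝ[X]) • M.map C + H.map C with hN
  set B : Matrix (Fin d) (Fin d) ℝ :=
    x ^ 2 • (1 : Matrix (Fin d) (Fin d) ℝ) - x • M + H with hBdef
  have hBx : B.IsHermitian := Bherm M H hHs hM.1 x
  have hdetB : B.det = 0 := by rw [hBdef, ← qp_eval]; exact hroot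
  have hprod : B.det = ∏ i, hBx.eigenvalues i := by simpa using hBx.det_eq_prod_eigenvalues
  obtain ⟨k, _, hk0⟩ := Finset.prod_eq_zero_iff.mp (hprod ▸ hdetB)
  have hpos : ∀ j, j ≠ k → 0 < hBx.eigenvalues j := by
    intro j hj
    by_contra hle
    push_neg at hle
    exact eig_pair H M hHs hHinv hHneg hM hx hBx hj hle (le_of_eq hk0)
  set v : Fin d → ℝ := WithLp.equiv 2 (Fin d → ℝ) (hBx.eigenvectorBasis k) with hv
  have hv0 : v ≠ 0 := by
    intro h
    apply hBx.eigenvectorBasis.orthonormal.ne_zero k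
    have := congrArg (WithLp.equiv 2 (Fin d → ℝ)).symm h
    simpa [hv] using this
  have hBv : B *ᵥ v = 0 := by
    rw [hv, WithLp.equiv_apply, hBx.mulVec_eigenvectorBasis k, hk0, zero_smul]
  have hker : ∀ w : Fin d → ℝ, B *ᵥ w = 0 → ∃ t : ℝ, w = t • v := by
    intro w hw
    set xw := (WithLp.equiv 2 (Fin d → ℝ)).symm w with hxw
    have hc : ∀ j, j ≠ k → hBx.eigenvectorBasis.repr xw j = 0 := fun j hj =>
      ker_repr B hBx w (by simpa [hxw] using hw) (ne_of_gt (hpos j hj))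
    refine ⟨hBx.eigenvectorBasis.repr xw k, ?_⟩
    have hsum := hBx.eigenvectorBasis.sum_repr xw
    have hsum2 : ∑ j, hBx.eigenvectorBasis.repr xw j • hBx.eigenvectorBasis j
        = hBx.eigenvectorBasis.repr xw k • hBx.eigenvectorBasis k :=
      Finset.sum_eq_single k (fun j _ hj => by rw [hc j hj, zero_smul]) (by simp)
    have hxww : xw = hBx.eigenvectorBasis.repr xw k • hBx.eigenvectorBasis k :=
      hsum.symm.trans hsum2
    have := congrArg (WithLp.equiv 2 (Fin d → ℝ)) hxww
    rw [Equiv.apply_symm_apply, WithLp.equiv_apply, WithLp.ofLp_smul] at this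
    exact this
  -- adjugate evaluated
  have hNmap : N.map (⇑(evalRingHom x)) = B := by
    ext i j
    by_cases hij : i = j <;>
      simp [hN, hBdef, Matrix.map_apply, Matrix.sub_apply, Matrix.add_apply,
        Matrix.smul_apply, Matrix.one_apply, hij, smul_eq_mul] <;> ring
  have hadj : N.adjugate.map (⇑(evalRingHom x)) = B.adjugate := by
    have h := RingHom.map_adjugate (evalRingHom x) N
    rw [RingHom.mapMatrix_apply, RingHom.mapMatrix_apply, hNmap] at h
    exact h
  set Ae : Matrix (Fin d) (Fin d) ℝ := B.adjugate with hAe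
  have hBAe : B * Ae = 0 := by
    rw [hAe, Matrix.mul_adjugate, hdetB, zero_smul]
  have hcol : ∀ j0 : Fin d, B *ᵥ (fun i => Ae i j0) = 0 := by
    intro j0
    funext i
    have h1 : (B *ᵥ fun i => Ae i j0) i = (B * Ae) i j0 := by
      simp [Matrix.mulVec, Matrix.mul_apply, dotProduct]
    rw [h1, hBAe]
    rfl
  choose t ht using fun j0 => hker _ (hcol j0)
  have hAet : ∀ i j, Ae i j = t j * v i := by
    intro i j
    have := congrFun (ht j) i
    simpa [Pi.smul_apply, smul_eq_mul] using this
  have hsymmAe : ∀ i j, Ae i j = Ae j i := by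
    intro i j
    have hT : Bᵀ = B := by
      rw [← Matrix.conjTranspose_eq_transpose_of_trivial]; exact hBx
    have h := Matrix.adjugate_transpose B
    rw [hT] at h
    have := congrFun (congrFun h j) i
    simpa [Matrix.transpose_apply, hAe] using this
  obtain ⟨i₀, hi₀⟩ := Function.ne_iff.mp hv0
  have hvi₀ : v i₀ ≠ 0 := by simpa using hi₀
  set c : ℝ := t i₀ / v i₀ with hcdef
  have hAec : ∀ i j, Ae i j = c * v i * v j := by
    intro i j
    have h1 : t j * v i₀ = t i₀ * v j := by
      rw [← hAet i₀ j, hsymmAe i₀ j, hAet j i₀]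
    have h2 : t j = c * v j := by
      rw [hcdef, div_mul_eq_mul_div, eq_div_iff hvi₀]
      linarith [h1]
    rw [hAet i j, h2]
    ring
  have htr : 0 < Ae.trace := trace_adj_pos B hBx hk0 hpos
  have htrc : Ae.trace = c * (v ⬝ᵥ v) := by
    have h1 : Ae.trace = ∑ i, Ae i i := rfl
    rw [h1]
    have h2 : ∀ i : Fin d, Ae i i = c * (v i * v i) := fun i => by rw [hAec]; ring
    rw [Finset.sum_congr rfl fun i _ => h2 i, ← Finset.mul_sum]
    rfl
  have hvv : 0 < v ⬝ᵥ v := dot_self_pos hv0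
  have hc0 : 0 < c := by
    by_contra hle
    push_neg at hle
    nlinarith
  -- derivative matrices
  set Nd : Matrix (Fin d) (Fin d) ℝ := Matrix.of (fun i j => ((N i j).derivative).eval x) with hNd
  set Ad : Matrix (Fin d) (Fin d) ℝ :=
    Matrix.of (fun i j => ((N.adjugate i j).derivative).eval x) with hAd
  have hNdval : Nd = (2 * x) • (1 : Matrix (Fin d) (Fin d) ℝ) - M := by
    ext i j
    by_cases hij : i = j <;>
      simp [hNd, hN, Matrix.sub_apply, Matrix.add_apply, Matrix.smul_apply, Matrix.one_apply,
        hij, smul_eq_mul] <;> norm_num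
  -- the differentiated identity
  have hmat : Nd * Ae + B * Ad = ((qp M H).derivative.eval x) • (1 : Matrix (Fin d) (Fin d) ℝ) := by
    ext i j
    have hentry : (∑ l, N i l * N.adjugate l j) = N.det * (1 : Matrix (Fin d) (Fin d) ℝ[X]) i j := by
      have h := congrFun (congrFun (Matrix.mul_adjugate N) i) j
      rw [Matrix.mul_apply] at h
      rw [h, Matrix.smul_apply, smul_eq_mul]
    have hder := congrArg (fun p : ℝ[X] => (Polynomial.derivative p).eval x) hentry
    simp only [derivative_sum, derivative_mul, eval_finset_sum, eval_add, eval_mul] at hder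
    -- LHS of hder : ∑ l, (deriv(N i l) eval x * (adj l j eval) + (N i l eval) * deriv(adj l j) eval)
    have hL : ∑ l, (((N i l).derivative.eval x) * ((N.adjugate l j).eval x)
        + ((N i l).eval x) * (((N.adjugate l j).derivative).eval x))
        = (Nd * Ae + B * Ad) i j := by
      rw [Matrix.add_apply, Matrix.mul_apply, Matrix.mul_apply, ← Finset.sum_add_distrib]
      apply Finset.sum_congr rfl
      intro l _
      have e1 : Ae l j = (N.adjugate l j).eval x := by
        rw [← hadj]; simp [Matrix.map_apply]
      have e2 : B i l = (N i l).eval x := by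
        rw [← hNmap]; simp [Matrix.map_apply]
      rw [e1, e2]
      rfl
    have hR : ((N.det.derivative).eval x) * (((1 : Matrix (Fin d) (Fin d) ℝ[X]) i j).eval x)
        + (N.det.eval x) * ((((1 : Matrix (Fin d) (Fin d) ℝ[X]) i j).derivative).eval x)
        = (((qp M H).derivative.eval x) • (1 : Matrix (Fin d) (Fin d) ℝ)) i j := by
      have hdet0 : N.det.eval x = 0 := by
        rw [show N.det = qp M H from rfl]; exact hroot
      rw [hdet0, zero_mul, add_zero, Matrix.smul_apply, smul_eq_mul]
      by_cases hij : i = j <;> simp [Matrix.one_apply, hij, show N.det = qp M H from rfl]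
    rw [← hL, ← hR]
    exact hder
  -- contract with v
  have hfinal := congrArg (fun A : Matrix (Fin d) (Fin d) ℝ => v ⬝ᵥ (A *ᵥ v)) hmat
  beta_reduce at hfinal
  have hAev : Ae *ᵥ v = (c * (v ⬝ᵥ v)) • v := by
    funext i
    have h1 : (Ae *ᵥ v) i = ∑ j, (c * v i * v j) * v j := by
      simp [Matrix.mulVec, dotProduct, hAec]
    rw [h1]
    have h2 : ∀ j : Fin d, (c * v i * v j) * v j = (c * v i) * (v j * v j) := fun j => by ring
    rw [Finset.sum_congr rfl fun j _ => h2 j, ← Finset.mul_sum]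
    have h3 : v ⬝ᵥ v = ∑ j, v j * v j := rfl
    rw [Pi.smul_apply, smul_eq_mul, ← h3]
    ring
  have hlhs : v ⬝ᵥ ((Nd * Ae + B * Ad) *ᵥ v)
      = (c * (v ⬝ᵥ v)) * (v ⬝ᵥ (Nd *ᵥ v)) := by
    rw [Matrix.add_mulVec, dotProduct_add, ← Matrix.mulVec_mulVec, ← Matrix.mulVec_mulVec,
      hAev, Matrix.mulVec_smul, dotProduct_smul, smul_eq_mul,
      symm_dot B hBx v (Ad *ᵥ v), hBv, zero_dotProduct, add_zero]
  have hrhs : v ⬝ᵥ ((((qp M H).derivative.eval x) • (1 : Matrix (Fin d) (Fin d) ℝ)) *ᵥ v)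
      = ((qp M H).derivative.eval x) * (v ⬝ᵥ v) := by
    rw [Matrix.smul_mulVec, Matrix.one_mulVec, dotProduct_smul, smul_eq_mul]
  rw [hlhs, hrhs] at hfinal
  have hNdv : v ⬝ᵥ (Nd *ᵥ v) = 2 * x * (v ⬝ᵥ v) - v ⬝ᵥ (M *ᵥ v) := by
    rw [hNdval, Matrix.sub_mulVec, dotProduct_sub, Matrix.smul_mulVec,
      Matrix.one_mulVec, dotProduct_smul, smul_eq_mul]
  have hMv : 0 < v ⬝ᵥ (M *ᵥ v) := by
    have := hM.dotProduct_mulVec_pos hv0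
    simpa using this
  have hNdneg : v ⬝ᵥ (Nd *ᵥ v) < 0 := by
    rw [hNdv]
    nlinarith
  intro hcontra
  rw [hcontra, zero_mul] at hfinal
  have : (c * (v ⬝ᵥ v)) * (v ⬝ᵥ (Nd *ᵥ v)) < 0 :=
    mul_neg_of_pos_of_neg (mul_pos hc0 hvv) hNdneg
  rw [← hfinal] at this
  exact lt_irrefl _ this

lemma rm_one {p : Polynomial ℂ} {a : ℂ} (hp : p ≠ 0) (h0 : p.eval a = 0)
    (h1 : p.derivative.eval a ≠ 0) : p.rootMultiplicity a = 1 := by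
  have hge : 1 ≤ p.rootMultiplicity a := (Polynomial.rootMultiplicity_pos hp).mpr h0
  have hlt : p.rootMultiplicity a < 2 := by
    by_contra hge2
    push_neg at hge2
    have hdvd : (X - C a) ^ 2 ∣ p :=
      dvd_trans (pow_dvd_pow _ hge2) (Polynomial.pow_rootMultiplicity_dvd p a)
    obtain ⟨q, hq⟩ := hdvd
    apply h1
    rw [hq, derivative_mul, derivative_pow]
    simp
  omega

lemma herm_real (S : Matrix (Fin d) (Fin d) ℝ) (hS : S.IsHermitian) (v : Fin d → ℂ) :
    star v ⬝ᵥ ((S.map (algebraMap ℝ ℂ)) *ᵥ v)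
      = ((((fun i => (v i).re) ⬝ᵥ (S *ᵥ (fun i => (v i).re))
          + (fun i => (v i).im) ⬝ᵥ (S *ᵥ (fun i => (v i).im)) : ℝ)) : ℂ) := by
  have hT' : Sᵀ = S := by
    rw [← Matrix.conjTranspose_eq_transpose_of_trivial]; exact hS
  have hT : ∀ i j, S j i = S i j := by
    intro i j
    conv_lhs => rw [← hT']
    exact Matrix.transpose_apply S j i
  have hexp : star v ⬝ᵥ ((S.map (algebraMap ℝ ℂ)) *ᵥ v)
      = ∑ i, ∑ j, (starRingEnd ℂ) (v i) * (((S i j : ℝ) : ℂ) * v j) := by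
    simp [dotProduct, Matrix.mulVec, Matrix.map_apply, Finset.mul_sum,
      Pi.star_apply, Complex.star_def]
  apply Complex.ext
  · rw [hexp, Complex.re_sum]
    have h1 : ∀ i ∈ Finset.univ,
        (∑ j, (starRingEnd ℂ) (v i) * (((S i j : ℝ) : ℂ) * v j)).re
          = ∑ j, (S i j * ((v i).re * (v j).re) + S i j * ((v i).im * (v j).im)) := by
      intro i _
      rw [Complex.re_sum]
      apply Finset.sum_congr rfl
      intro j _
      simp [Complex.mul_re, Complex.mul_im]
      ring
    rw [Finset.sum_congr rfl h1]
    have h2 : (((fun i => (v i).re) ⬝ᵥ (S *ᵥ (fun i => (v i).re))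
        + (fun i => (v i).im) ⬝ᵥ (S *ᵥ (fun i => (v i).im)) : ℝ))
        = ∑ i, ∑ j, (S i j * ((v i).re * (v j).re) + S i j * ((v i).im * (v j).im)) := by
      simp [dotProduct, Matrix.mulVec, Finset.mul_sum, Finset.sum_add_distrib]
      congr 1 <;> exact Finset.sum_congr rfl fun i _ => Finset.sum_congr rfl fun j _ => by ring
    rw [h2, Complex.ofReal_re]
  · rw [hexp, Complex.im_sum, Complex.ofReal_im]
    have h1 : ∀ i ∈ Finset.univ,
        (∑ j, (starRingEnd ℂ) (v i) * (((S i j : ℝ) : ℂ) * v j)).im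
          = ∑ j, S i j * ((v i).re * (v j).im) - ∑ j, S i j * ((v i).im * (v j).re) := by
      intro i _
      rw [Complex.im_sum, ← Finset.sum_sub_distrib]
      apply Finset.sum_congr rfl
      intro j _
      simp [Complex.mul_re, Complex.mul_im]
      ring
    rw [Finset.sum_congr rfl h1, Finset.sum_sub_distrib, sub_eq_zero]
    rw [Finset.sum_comm]
    apply Finset.sum_congr rfl
    intro j _
    apply Finset.sum_congr rfl
    intro i _
    rw [hT i j]
    ring

lemma herm_real_pos (S : Matrix (Fin d) (Fin d) ℝ) (hS : S.PosDef) {v : Fin d → ℂ}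
    (hv : v ≠ 0) :
    0 < (fun i => (v i).re) ⬝ᵥ (S *ᵥ (fun i => (v i).re))
        + (fun i => (v i).im) ⬝ᵥ (S *ᵥ (fun i => (v i).im)) := by
  have hre : ∀ w : Fin d → ℝ, 0 ≤ w ⬝ᵥ (S *ᵥ w) := by
    intro w
    have := hS.posSemidef.dotProduct_mulVec_nonneg w
    simpa using this
  obtain ⟨i, hi⟩ := Function.ne_iff.mp hv
  have hi' : (v i).re ≠ 0 ∨ (v i).im ≠ 0 := by
    by_contra hcon
    push_neg at hcon
    exact hi (Complex.ext hcon.1 hcon.2)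
  rcases hi' with h | h
  · have h1 : (fun i => (v i).re) ≠ 0 := fun hc => h (congrFun hc i)
    have := hS.dotProduct_mulVec_pos h1
    have h2 : 0 < (fun i => (v i).re) ⬝ᵥ (S *ᵥ (fun i => (v i).re)) := by simpa using this
    linarith [hre (fun i => (v i).im)]
  · have h1 : (fun i => (v i).im) ≠ 0 := fun hc => h (congrFun hc i)
    have := hS.dotProduct_mulVec_pos h1
    have h2 : 0 < (fun i => (v i).im) ⬝ᵥ (S *ᵥ (fun i => (v i).im)) := by simpa using this
    linarith [hre (fun i => (v i).re)]

lemma roots_re (M H : Matrix (Fin d) (Fin d) ℝ) (hHs : H.IsHermitian) (hHinv : IsUnit H)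
    (hM : M.PosDef) {z : ℂ}
    (hz : (z ^ 2 • (1 : Matrix (Fin d) (Fin d) ℂ) - z • M.map (algebraMap ℝ ℂ)
        + H.map (algebraMap ℝ ℂ)).det = 0) (hre : z.re ≤ 0) :
    z.im = 0 ∧ z.re < 0 := by
  obtain ⟨v, hv0, hveq⟩ := Matrix.exists_mulVec_eq_zero_iff.mpr hz
  have hz0 : z ≠ 0 := by
    rintro rfl
    have hveq' : (H.map (algebraMap ℝ ℂ)) *ᵥ v = 0 := by
      have h0 : ((0:ℂ) ^ 2 • (1 : Matrix (Fin d) (Fin d) ℂ) - (0:ℂ) • M.map (algebraMap ℝ ℂ)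
          + H.map (algebraMap ℝ ℂ)) = H.map (algebraMap ℝ ℂ) := by simp
      rw [← h0]; exact hveq
    have hdet : (H.map (algebraMap ℝ ℂ)).det = 0 :=
      Matrix.exists_mulVec_eq_zero_iff.mp ⟨v, hv0, hveq'⟩
    have hdet2 : (algebraMap ℝ ℂ) H.det = 0 := by
      rw [RingHom.map_det, RingHom.mapMatrix_apply]; exact hdet
    have hdet' : H.det = 0 := by
      have : ((H.det : ℝ) : ℂ) = 0 := hdet2
      exact_mod_cast this
    exact (IsUnit.ne_zero ((Matrix.isUnit_iff_isUnit_det H).mp hHinv)) hdet'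
  have hdot := congrArg (fun w => star v ⬝ᵥ w) hveq
  simp only [dotProduct_zero] at hdot
  rw [Matrix.add_mulVec, Matrix.sub_mulVec, Matrix.smul_mulVec, Matrix.smul_mulVec,
    Matrix.one_mulVec, dotProduct_add, dotProduct_sub, dotProduct_smul, dotProduct_smul,
    smul_eq_mul, smul_eq_mul] at hdot
  set a : Fin d → ℝ := fun i => (v i).re with ha
  set b : Fin d → ℝ := fun i => (v i).im with hb
  have hsv : star v ⬝ᵥ v = ((a ⬝ᵥ a + b ⬝ᵥ b : ℝ) : ℂ) := by
    have h1 : star v ⬝ᵥ ((1 : Matrix (Fin d) (Fin d) ℝ).map (algebraMap ℝ ℂ) *ᵥ v)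
        = ((a ⬝ᵥ ((1 : Matrix (Fin d) (Fin d) ℝ) *ᵥ a)
            + b ⬝ᵥ ((1 : Matrix (Fin d) (Fin d) ℝ) *ᵥ b) : ℝ) : ℂ) :=
      herm_real 1 Matrix.isHermitian_one v
    rw [Matrix.map_one _ (map_zero _) (map_one _), Matrix.one_mulVec] at h1
    rw [Matrix.one_mulVec, Matrix.one_mulVec] at h1
    exact h1
  have hsm : star v ⬝ᵥ ((M.map (algebraMap ℝ ℂ)) *ᵥ v)
      = ((a ⬝ᵥ (M *ᵥ a) + b ⬝ᵥ (M *ᵥ b) : ℝ) : ℂ) := herm_real M hM.1 v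
  have hsh : star v ⬝ᵥ ((H.map (algebraMap ℝ ℂ)) *ᵥ v)
      = ((a ⬝ᵥ (H *ᵥ a) + b ⬝ᵥ (H *ᵥ b) : ℝ) : ℂ) := herm_real H hHs v
  rw [hsv, hsm, hsh] at hdot
  set nn : ℝ := a ⬝ᵥ a + b ⬝ᵥ b with hnn
  set mm : ℝ := a ⬝ᵥ (M *ᵥ a) + b ⬝ᵥ (M *ᵥ b) with hmm
  have hnpos : 0 < nn := by
    obtain ⟨i, hi⟩ := Function.ne_iff.mp hv0
    have hi' : a i ≠ 0 ∨ b i ≠ 0 := by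
      by_contra hcon
      push_neg at hcon
      exact hi (Complex.ext hcon.1 hcon.2)
    have h1 : 0 ≤ a ⬝ᵥ a := by
      have : a ⬝ᵥ a = ∑ k, a k * a k := rfl
      rw [this]; exact Finset.sum_nonneg fun k _ => mul_self_nonneg _
    have h2 : 0 ≤ b ⬝ᵥ b := by
      have : b ⬝ᵥ b = ∑ k, b k * b k := rfl
      rw [this]; exact Finset.sum_nonneg fun k _ => mul_self_nonneg _
    rcases hi' with h | h
    · have : a ≠ 0 := fun hc => h (congrFun hc i)
      have := dot_self_pos this
      rw [hnn]; linarith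
    · have : b ≠ 0 := fun hc => h (congrFun hc i)
      have := dot_self_pos this
      rw [hnn]; linarith
  have hmpos : 0 < mm := herm_real_pos M hM hv0
  -- imaginary part
  have him := congrArg Complex.im hdot
  simp only [Complex.add_im, Complex.sub_im, Complex.mul_im, Complex.ofReal_re,
    Complex.ofReal_im, Complex.zero_im, mul_zero, zero_mul, add_zero, sub_zero] at him
  have hsq : (z ^ 2).im = 2 * z.re * z.im := by
    rw [sq, Complex.mul_im]; ring
  rw [hsq] at him
  -- him : 2 * z.re * z.im * nn - z.im * mm + 0 = 0  (roughly)
  have hfac : z.im * (2 * z.re * nn - mm) = 0 := by linarith [him]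
  have himz : z.im = 0 := by
    rcases mul_eq_zero.mp hfac with h | h
    · exact h
    · exfalso
      have : 2 * z.re * nn ≤ 0 :=
        mul_nonpos_of_nonpos_of_nonneg (by linarith) (le_of_lt hnpos)
      nlinarith
  refine ⟨himz, ?_⟩
  rcases lt_or_eq_of_le hre with h | h
  · exact h
  · exfalso
    exact hz0 (Complex.ext (by simpa using h) (by simpa using himz))

end Stmt1Aux

open Stmt1Aux

theorem stmt_1 (d : ℕ) (hd : 1 ≤ d)
    (H M : Matrix (Fin d) (Fin d) ℝ)
    (hHsymm : H.IsHermitian) (hHinv : IsUnit H)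
    (hHneg : (Finset.univ.filter (fun i => hHsymm.eigenvalues i < 0)).card = 1)
    (hM : M.PosDef)
    (Φ : Matrix (Fin d ⊕ Fin d) (Fin d ⊕ Fin d) ℝ)
    (hΦ : Φ = Matrix.fromBlocks 0 (-H) 1 M) :
    IsUnit Φ ∧
    (∀ z ∈ (Φ.map (fun x : ℝ => (x : ℂ))).charpoly.roots, z.re ≠ 0) ∧
    ((Φ.map (fun x : ℝ => (x : ℂ))).charpoly.roots.filter (fun z => z.re < 0)).card = 1 ∧
    (∀ z ∈ (Φ.map (fun x : ℝ => (x : ℂ))).charpoly.roots, z.re < 0 → z.im = 0) := by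
  subst hΦ
  set pC := ((Matrix.fromBlocks 0 (-H) 1 M).map (fun x : ℝ => (x : ℂ))).charpoly with hpCdef
  have hpC : pC = (qp M H).map (algebraMap ℝ ℂ) := charpolyC M H
  have hpC0 : pC ≠ 0 := (Matrix.charpoly_monic _).ne_zero
  have hevalz : ∀ z : ℂ, z ∈ pC.roots → (z ^ 2 • (1 : Matrix (Fin d) (Fin d) ℂ)
      - z • M.map (algebraMap ℝ ℂ) + H.map (algebraMap ℝ ℂ)).det = 0 := by
    intro z hz
    have h1 : pC.eval z = 0 := (Polynomial.mem_roots'.mp hz).2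
    have h2 : ((qp M H).map (algebraMap ℝ ℂ)).eval z = 0 := by rw [← hpC]; exact h1
    rw [qpC_eval] at h2
    exact h2
  refine ⟨?_, ?_, ?_, ?_⟩
  · haveI : Invertible M :=
      Matrix.invertibleOfIsUnitDet M (isUnit_iff_ne_zero.mpr (ne_of_gt hM.det_pos))
    have hdet : (Matrix.fromBlocks (0 : Matrix (Fin d) (Fin d) ℝ) (-H) 1 M).det = H.det := by
      rw [Matrix.det_fromBlocks₂₂]
      have h1 : (0 : Matrix (Fin d) (Fin d) ℝ) - (-H) * ⅟M * 1 = H * ⅟M := by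
        rw [Matrix.mul_one, Matrix.neg_mul, zero_sub, neg_neg]
      rw [h1, Matrix.det_mul]
      calc M.det * (H.det * (⅟M).det) = H.det * (M.det * (⅟M).det) := by ring
        _ = H.det * (M * ⅟M).det := by rw [Matrix.det_mul]
        _ = H.det := by rw [mul_invOf_self, Matrix.det_one, mul_one]
    rw [Matrix.isUnit_iff_isUnit_det, hdet]
    exact (Matrix.isUnit_iff_isUnit_det H).mp hHinv
  · intro z hz h0
    have h1 := roots_re M H hHsymm hHinv hM (hevalz z hz) (le_of_eq h0)
    linarith [h1.2]
  · obtain ⟨x₁, hx₁neg, hx₁root⟩ := exists_neg_root M H hHsymm hHinv hHneg hM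
    have hx₁C : pC.eval ((x₁ : ℝ) : ℂ) = 0 := by
      rw [hpC, Polynomial.eval_map, ← Complex.coe_algebraMap, Polynomial.eval₂_at_apply, hx₁root, map_zero]
    have hx₁mem : ((x₁ : ℝ) : ℂ) ∈ pC.roots := Polynomial.mem_roots'.mpr ⟨hpC0, hx₁C⟩
    have hx₁filt : ((x₁ : ℝ) : ℂ) ∈ pC.roots.filter (fun z => z.re < 0) :=
      Multiset.mem_filter.mpr ⟨hx₁mem, by simpa using hx₁neg⟩
    have hall : ∀ z ∈ pC.roots.filter (fun z => z.re < 0), z = ((x₁ : ℝ) : ℂ) := by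
      intro z hzf
      obtain ⟨hzr, hzlt⟩ := Multiset.mem_filter.mp hzf
      have h1 := roots_re M H hHsymm hHinv hM (hevalz z hzr) (le_of_lt hzlt)
      have hz2 : z = ((z.re : ℝ) : ℂ) := Complex.ext (by simp) (by simp [h1.1])
      have hz3 : (qp M H).eval z.re = 0 := by
        have h4 : pC.eval z = 0 := (Polynomial.mem_roots'.mp hzr).2
        rw [hz2, hpC, Polynomial.eval_map, ← Complex.coe_algebraMap, Polynomial.eval₂_at_apply] at h4
        have h5 : (((qp M H).eval z.re : ℝ) : ℂ) = 0 := h4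
        exact_mod_cast h5
      have h6 := unique_neg_root M H hHsymm hHinv hHneg hM hzlt hx₁neg hz3 hx₁root
      rw [hz2, h6]
    have hcnt : pC.roots.count ((x₁ : ℝ) : ℂ) = 1 := by
      rw [Polynomial.count_roots]
      apply rm_one hpC0 hx₁C
      have hd := deriv_ne_zero M H hHsymm hHinv hHneg hM hx₁neg hx₁root
      have h7 : pC.derivative.eval ((x₁ : ℝ) : ℂ)
          = (((qp M H).derivative.eval x₁ : ℝ) : ℂ) := by
        rw [hpC, Polynomial.derivative_map, Polynomial.eval_map, ← Complex.coe_algebraMap, Polynomial.eval₂_at_apply]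
      rw [h7]
      exact_mod_cast hd
    set S := pC.roots.filter (fun z => z.re < 0) with hSdef
    have hrep : S = Multiset.replicate (Multiset.card S) ((x₁ : ℝ) : ℂ) :=
      Multiset.eq_replicate_of_mem hall
    have hcount : S.count ((x₁ : ℝ) : ℂ) = Multiset.card S := by
      conv_lhs => rw [hrep]
      simp [Multiset.count_replicate]
    have hcf : S.count ((x₁ : ℝ) : ℂ) = pC.roots.count ((x₁ : ℝ) : ℂ) := by
      rw [hSdef]
      exact Multiset.count_filter_of_pos (by simpa using hx₁neg)
    rw [← hcount, hcf, hcnt]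
  · intro z hz hlt
    exact (roots_re M H hHsymm hHinv hM (hevalz z hz) (le_of_lt hlt)).1
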